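/- Let k be a totally ordered division ring, let Ω be a convex subset of a right k-vector space E, and let F ∪ {a} be a set of affine functionals on E. Set A⁺ := {x ∈ Ω : a(x) > 0} and A⁻ := {x ∈ Ω : a(x) < 0}. Then the greatest element of Bool(F, Ω) below A⁺ ∪ A⁻ exists if and only if the greatest elements of Bool(F, Ω) below A⁺ and below A⁻ both exist, and in that case (A⁺ ∪ A⁻)_{Bool(F,Ω)} = (A⁺)_{Bool(F,Ω)} ∪ (A⁻)_{Bool(F,Ω)}. -/

import Mathlib

/-- An affine functional on a right `k`-vector space `E`: a map `f : E → k` such that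
`f - f 0` is a linear functional (additive, and `(f - f 0)(x · c) = (f - f 0)(x) * c`). -/
def IsAffineFunctional (k : Type*) [DivisionRing k] (E : Type*) [AddCommGroup E]
    [Module kᵐᵒᵖ E] (f : E → k) : Prop :=
  (∀ x y : E, f (x + y) - f 0 = (f x - f 0) + (f y - f 0)) ∧
  (∀ (c : k) (x : E), f (MulOpposite.op c • x) - f 0 = (f x - f 0) * c)

/-- A convex subset of a right `k`-vector space. -/
def IsConvexSet (k : Type*) [DivisionRing k] [LinearOrder k] (E : Type*) [AddCommGroup E]
    [Module kᵐᵒᵖ E] (Ω : Set E) : Prop :=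
  ∀ x ∈ Ω, ∀ y ∈ Ω, ∀ lam mu : k, 0 ≤ lam → 0 ≤ mu → lam + mu = 1 →
    MulOpposite.op lam • x + MulOpposite.op mu • y ∈ Ω

/-- Membership in `Bool(F, Ω)`: the Boolean subalgebra of the powerset of `Ω` generated
by the sets `⟦f > 0⟧ = {x ∈ Ω : f x > 0}` and `⟦f < 0⟧` for `f ∈ F`. -/
inductive MemBoolF {k E : Type*} [DivisionRing k] [LinearOrder k]
    (F : Set (E → k)) (Ω : Set E) : Set E → Prop
  | pos (f : E → k) (hf : f ∈ F) : MemBoolF F Ω {x ∈ Ω | 0 < f x}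
  | neg (f : E → k) (hf : f ∈ F) : MemBoolF F Ω {x ∈ Ω | f x < 0}
  | empty : MemBoolF F Ω ∅
  | full : MemBoolF F Ω Ω
  | union {U V : Set E} : MemBoolF F Ω U → MemBoolF F Ω V → MemBoolF F Ω (U ∪ V)
  | inter {U V : Set E} : MemBoolF F Ω U → MemBoolF F Ω V → MemBoolF F Ω (U ∩ V)
  | sdiff {U V : Set E} : MemBoolF F Ω U → MemBoolF F Ω V → MemBoolF F Ω (U \ V)

section Aux

variable {k : Type*} [DivisionRing k] [LinearOrder k]
    [CovariantClass k k (· + ·) (· < ·)] [PosMulStrictMono k] [MulPosStrictMono k]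
    {E : Type*} [AddCommGroup E] [Module kᵐᵒᵖ E]

set_option linter.unusedSectionVars false

lemma aux_aff_comb {f : E → k} (hf : IsAffineFunctional k E f) {lam mu : k}
    (h1 : lam + mu = 1) (x y : E) :
    f (MulOpposite.op lam • x + MulOpposite.op mu • y) = f x * lam + f y * mu := by
  obtain ⟨hadd, hsmul⟩ := hf
  have key : f (MulOpposite.op lam • x + MulOpposite.op mu • y) - f 0
      = (f x - f 0) * lam + (f y - f 0) * mu := by
    rw [hadd, hsmul, hsmul]
  have h5 : f 0 * lam + f 0 * mu = f 0 := by rw [← mul_add, h1, mul_one]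
  have h6 := sub_eq_iff_eq_add.mp key
  rw [h6, sub_mul, sub_mul]
  calc f x * lam - f 0 * lam + (f y * mu - f 0 * mu) + f 0
      = f x * lam + f y * mu + (f 0 - (f 0 * lam + f 0 * mu)) := by abel
    _ = f x * lam + f y * mu := by rw [h5, sub_self, add_zero]

lemma aux_comb_pos {p q lam mu : k} (hp : 0 < p) (hq : 0 < q) (hl : 0 ≤ lam) (hm : 0 ≤ mu)
    (h1 : lam + mu = 1) : 0 < p * lam + q * mu := by
  rcases hl.eq_or_lt with h | h
  · have hmu : mu = 1 := by rwa [← h, zero_add] at h1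
    rw [← h, hmu, mul_zero, mul_one, zero_add]; exact hq
  · have h2 : 0 < p * lam := mul_pos hp h
    rcases hm.eq_or_lt with h' | h'
    · rw [← h', mul_zero, add_zero]; exact h2
    · exact add_pos h2 (mul_pos hq h')

lemma aux_comb_neg {p q lam mu : k} (hp : p < 0) (hq : q < 0) (hl : 0 ≤ lam) (hm : 0 ≤ mu)
    (h1 : lam + mu = 1) : p * lam + q * mu < 0 := by
  have := aux_comb_pos (neg_pos.2 hp) (neg_pos.2 hq) hl hm h1
  rw [neg_mul, neg_mul, ← neg_add] at this
  exact neg_pos.mp this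

lemma aux_zero_lt_one {p : k} (hp : 0 < p) : (0 : k) < 1 := by
  rcases lt_trichotomy (1 : k) 0 with h | h | h
  · have h2 := mul_lt_mul_of_pos_left h hp
    rw [mul_one, mul_zero] at h2
    exact absurd h2 (asymm hp)
  · exfalso
    have : p = 0 := by rw [← mul_one p, h, mul_zero]
    exact hp.ne' this
  · exact h

lemma aux_inv_pos {d : k} (hd : 0 < d) : 0 < d⁻¹ := by
  rcases lt_trichotomy d⁻¹ 0 with h | h | h
  · have h2 := mul_lt_mul_of_pos_left h hd
    rw [mul_inv_cancel₀ hd.ne', mul_zero] at h2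
    exact absurd h2 (asymm (aux_zero_lt_one hd))
  · exfalso
    have h2 := mul_inv_cancel₀ hd.ne'
    rw [h, mul_zero] at h2
    exact (aux_zero_lt_one hd).ne' h2.symm
  · exact h

lemma aux_dichotomy {Ω : Set E} {a : E → k} (ha : IsAffineFunctional k E a) {C : Set E}
    (hC : IsConvexSet k E C)
    (hsub : C ⊆ {x ∈ Ω | 0 < a x} ∪ {x ∈ Ω | a x < 0}) :
    C ⊆ {x ∈ Ω | 0 < a x} ∨ C ⊆ {x ∈ Ω | a x < 0} := by
  by_contra hcon
  push_neg at hcon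
  obtain ⟨hnp, hnm⟩ := hcon
  obtain ⟨x, hxC, hx⟩ := Set.not_subset.mp hnp
  obtain ⟨y, hyC, hy⟩ := Set.not_subset.mp hnm
  have hxneg : a x < 0 := by
    rcases hsub hxC with h | h
    · exact absurd h hx
    · exact h.2
  have hypos : 0 < a y := by
    rcases hsub hyC with h | h
    · exact h.2
    · exact absurd h hy
  set p := a y with hp
  set n := a x with hn
  have hd : 0 < p - n := by
    have h1 : 0 < -n := neg_pos.2 hxneg
    have := add_pos hypos h1
    rwa [← sub_eq_add_neg] at this
  set d := p - n with hddef
  set lam := d⁻¹ * (-n) with hlamdef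
  set mu := d⁻¹ * p with hmudef
  have hlam : 0 < lam := mul_pos (aux_inv_pos hd) (neg_pos.2 hxneg)
  have hmu : 0 < mu := mul_pos (aux_inv_pos hd) hypos
  have hsum : lam + mu = 1 := by
    rw [hlamdef, hmudef, ← mul_add, neg_add_eq_sub, ← hddef, inv_mul_cancel₀ hd.ne']
  have hmu' : mu = 1 - lam := eq_sub_of_add_eq' hsum
  set z := MulOpposite.op lam • y + MulOpposite.op mu • x with hzdef
  have hzC : z ∈ C := hC y hyC x hxC lam mu hlam.le hmu.le hsum
  have hkey : (p - n) * lam = -n := by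
    rw [hlamdef, ← hddef, ← mul_assoc, mul_inv_cancel₀ hd.ne', one_mul]
  have haz : a z = 0 := by
    rw [hzdef, aux_aff_comb ha hsum y x, ← hp, ← hn, hmu', mul_sub, mul_one]
    calc p * lam + (n - n * lam) = p * lam - n * lam + n := by abel
      _ = (p - n) * lam + n := by rw [← sub_mul]
      _ = -n + n := by rw [hkey]
      _ = 0 := neg_add_cancel n
  rcases hsub hzC with h | h
  · exact absurd h.2 (by rw [haz]; exact lt_irrefl 0)
  · exact absurd h.2 (by rw [haz]; exact lt_irrefl 0)

lemma aux_memBool_subset {F : Set (E → k)} {Ω U : Set E} (h : MemBoolF F Ω U) : U ⊆ Ω := by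
  induction h with
  | pos f hf => exact fun x hx => hx.1
  | neg f hf => exact fun x hx => hx.1
  | empty => exact Set.empty_subset _
  | full => exact subset_rfl
  | union hU hV ihU ihV => exact Set.union_subset ihU ihV
  | inter hU hV ihU ihV => exact fun x hx => ihU hx.1
  | sdiff hU hV ihU ihV => exact fun x hx => ihU hx.1

lemma aux_cvx_inter {C D : Set E} (hC : IsConvexSet k E C) (hD : IsConvexSet k E D) :
    IsConvexSet k E (C ∩ D) := fun x hx y hy lam mu hl hm h1 =>
  ⟨hC x hx.1 y hy.1 lam mu hl hm h1, hD x hx.2 y hy.2 lam mu hl hm h1⟩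

lemma aux_cvx_pos {Ω : Set E} (hΩ : IsConvexSet k E Ω) {f : E → k}
    (hf : IsAffineFunctional k E f) : IsConvexSet k E {x ∈ Ω | 0 < f x} := by
  intro x hx y hy lam mu hl hm h1
  refine ⟨hΩ x hx.1 y hy.1 lam mu hl hm h1, ?_⟩
  rw [aux_aff_comb hf h1]
  exact aux_comb_pos hx.2 hy.2 hl hm h1

lemma aux_cvx_neg {Ω : Set E} (hΩ : IsConvexSet k E Ω) {f : E → k}
    (hf : IsAffineFunctional k E f) : IsConvexSet k E {x ∈ Ω | f x < 0} := by
  intro x hx y hy lam mu hl hm h1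
  refine ⟨hΩ x hx.1 y hy.1 lam mu hl hm h1, ?_⟩
  rw [aux_aff_comb hf h1]
  exact aux_comb_neg hx.2 hy.2 hl hm h1

lemma aux_cvx_zero {Ω : Set E} (hΩ : IsConvexSet k E Ω) {f : E → k}
    (hf : IsAffineFunctional k E f) : IsConvexSet k E {x ∈ Ω | f x = 0} := by
  intro x hx y hy lam mu hl hm h1
  refine ⟨hΩ x hx.1 y hy.1 lam mu hl hm h1, ?_⟩
  rw [aux_aff_comb hf h1, hx.2, hy.2, zero_mul, zero_mul, add_zero]

/-- `U` is a finite union of convex members of `Bool(F, Ω)`. -/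
def GoodDec (F : Set (E → k)) (Ω : Set E) (U : Set E) : Prop :=
  ∃ S : Set (Set E), S.Finite ∧ (∀ C ∈ S, MemBoolF F Ω C ∧ IsConvexSet k E C) ∧ U = ⋃₀ S

lemma GoodDec.union {F : Set (E → k)} {Ω U V : Set E} (hU : GoodDec F Ω U)
    (hV : GoodDec F Ω V) : GoodDec F Ω (U ∪ V) := by
  obtain ⟨S, hfS, hS, rfl⟩ := hU
  obtain ⟨T, hfT, hT, rfl⟩ := hV
  refine ⟨S ∪ T, hfS.union hfT, ?_, (Set.sUnion_union S T).symm⟩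
  rintro C (hC | hC)
  · exact hS C hC
  · exact hT C hC

lemma GoodDec.inter {F : Set (E → k)} {Ω U V : Set E} (hU : GoodDec F Ω U)
    (hV : GoodDec F Ω V) : GoodDec F Ω (U ∩ V) := by
  obtain ⟨S, hfS, hS, rfl⟩ := hU
  obtain ⟨T, hfT, hT, rfl⟩ := hV
  refine ⟨Set.image2 (· ∩ ·) S T, hfS.image2 _ hfT, ?_, ?_⟩
  · rintro C ⟨A, hA, B, hB, rfl⟩
    exact ⟨(hS A hA).1.inter (hT B hB).1, aux_cvx_inter (hS A hA).2 (hT B hB).2⟩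
  · ext x
    simp only [Set.mem_inter_iff, Set.mem_sUnion, Set.mem_image2]
    constructor
    · rintro ⟨⟨A, hA, hxA⟩, ⟨B, hB, hxB⟩⟩
      exact ⟨A ∩ B, ⟨A, hA, B, hB, rfl⟩, hxA, hxB⟩
    · rintro ⟨Z, ⟨A, hA, B, hB, rfl⟩, hxA, hxB⟩
      exact ⟨⟨A, hA, hxA⟩, ⟨B, hB, hxB⟩⟩

lemma GoodDec.single {F : Set (E → k)} {Ω U : Set E} (h1 : MemBoolF F Ω U)
    (h2 : IsConvexSet k E U) : GoodDec F Ω U :=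
  ⟨{U}, Set.finite_singleton _, by rintro C rfl; exact ⟨h1, h2⟩,
    (Set.sUnion_singleton _).symm⟩

lemma GoodDec.empty {F : Set (E → k)} {Ω : Set E} : GoodDec F Ω (∅ : Set E) :=
  ⟨∅, Set.finite_empty, by rintro C ⟨⟩, Set.sUnion_empty.symm⟩

lemma aux_zeroset_mem {F : Set (E → k)} {Ω : Set E} {f : E → k} (hf : f ∈ F) :
    MemBoolF F Ω {x ∈ Ω | f x = 0} := by
  have heq : {x ∈ Ω | f x = 0} = Ω \ ({x ∈ Ω | 0 < f x} ∪ {x ∈ Ω | f x < 0}) := by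
    ext x
    simp only [Set.mem_setOf_eq, Set.mem_diff, Set.mem_union]
    constructor
    · rintro ⟨h1, h2⟩
      exact ⟨h1, by rintro (⟨-, h3⟩ | ⟨-, h3⟩) <;> simp [h2] at h3⟩
    · rintro ⟨h1, h2⟩
      refine ⟨h1, ?_⟩
      rcases lt_trichotomy (f x) 0 with h | h | h
      · exact absurd (Or.inr ⟨h1, h⟩) h2
      · exact h
      · exact absurd (Or.inl ⟨h1, h⟩) h2
  rw [heq]
  exact MemBoolF.full.sdiff ((MemBoolF.pos f hf).union (MemBoolF.neg f hf))

lemma aux_main_dec {F : Set (E → k)} {Ω : Set E} (hΩ : IsConvexSet k E Ω)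
    (hF : ∀ f ∈ F, IsAffineFunctional k E f) {U : Set E} (h : MemBoolF F Ω U) :
    GoodDec F Ω U ∧ GoodDec F Ω (Ω \ U) := by
  induction h with
  | pos f hf =>
    constructor
    · exact .single (MemBoolF.pos f hf) (aux_cvx_pos hΩ (hF f hf))
    · have heq : Ω \ {x ∈ Ω | 0 < f x} = {x ∈ Ω | f x < 0} ∪ {x ∈ Ω | f x = 0} := by
        ext x
        simp only [Set.mem_diff, Set.mem_setOf_eq, Set.mem_union]
        constructor
        · rintro ⟨h1, h2⟩
          have h3 : ¬ 0 < f x := fun hc => h2 ⟨h1, hc⟩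
          rcases (not_lt.mp h3).lt_or_eq with h4 | h4
          · exact Or.inl ⟨h1, h4⟩
          · exact Or.inr ⟨h1, h4⟩
        · rintro (⟨h1, h2⟩ | ⟨h1, h2⟩)
          · exact ⟨h1, fun hc => absurd hc.2 (asymm h2)⟩
          · exact ⟨h1, fun hc => by rw [h2] at hc; exact lt_irrefl 0 hc.2⟩
      rw [heq]
      exact (GoodDec.single (MemBoolF.neg f hf) (aux_cvx_neg hΩ (hF f hf))).union
        (GoodDec.single (aux_zeroset_mem hf) (aux_cvx_zero hΩ (hF f hf)))
  | neg f hf =>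
    constructor
    · exact .single (MemBoolF.neg f hf) (aux_cvx_neg hΩ (hF f hf))
    · have heq : Ω \ {x ∈ Ω | f x < 0} = {x ∈ Ω | 0 < f x} ∪ {x ∈ Ω | f x = 0} := by
        ext x
        simp only [Set.mem_diff, Set.mem_setOf_eq, Set.mem_union]
        constructor
        · rintro ⟨h1, h2⟩
          have h3 : ¬ f x < 0 := fun hc => h2 ⟨h1, hc⟩
          rcases (not_lt.mp h3).lt_or_eq with h4 | h4
          · exact Or.inl ⟨h1, h4⟩
          · exact Or.inr ⟨h1, h4.symm⟩
        · rintro (⟨h1, h2⟩ | ⟨h1, h2⟩)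
          · exact ⟨h1, fun hc => absurd hc.2 (asymm h2)⟩
          · exact ⟨h1, fun hc => by rw [h2] at hc; exact lt_irrefl 0 hc.2⟩
      rw [heq]
      exact (GoodDec.single (MemBoolF.pos f hf) (aux_cvx_pos hΩ (hF f hf))).union
        (GoodDec.single (aux_zeroset_mem hf) (aux_cvx_zero hΩ (hF f hf)))
  | empty =>
    refine ⟨.empty, ?_⟩
    rw [Set.diff_empty]
    exact .single MemBoolF.full hΩ
  | full =>
    refine ⟨.single MemBoolF.full hΩ, ?_⟩
    rw [Set.diff_self]
    exact .empty
  | union hU hV ihU ihV =>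
    refine ⟨ihU.1.union ihV.1, ?_⟩
    rename_i U V
    have heq : Ω \ (U ∪ V) = (Ω \ U) ∩ (Ω \ V) := by
      ext x; simp only [Set.mem_diff, Set.mem_union, Set.mem_inter_iff]; tauto
    rw [heq]
    exact ihU.2.inter ihV.2
  | inter hU hV ihU ihV =>
    refine ⟨ihU.1.inter ihV.1, ?_⟩
    rename_i U V
    have heq : Ω \ (U ∩ V) = (Ω \ U) ∪ (Ω \ V) := by
      ext x; simp only [Set.mem_diff, Set.mem_union, Set.mem_inter_iff, not_and_or]; tauto
    rw [heq]
    exact ihU.2.union ihV.2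
  | sdiff hU hV ihU ihV =>
    rename_i U V
    have hUsub := aux_memBool_subset hU
    have hVsub := aux_memBool_subset hV
    constructor
    · have heq : U \ V = U ∩ (Ω \ V) := by
        ext x
        simp only [Set.mem_diff, Set.mem_inter_iff]
        exact ⟨fun h => ⟨h.1, hUsub h.1, h.2⟩, fun h => ⟨h.1, h.2.2⟩⟩
      rw [heq]
      exact ihU.1.inter ihV.2
    · have heq : Ω \ (U \ V) = (Ω \ U) ∪ V := by
        ext x
        simp only [Set.mem_diff, Set.mem_union, not_and_or, not_not]
        constructor
        · rintro ⟨h1, h2 | h2⟩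
          · exact Or.inl ⟨h1, h2⟩
          · exact Or.inr h2
        · rintro (⟨h1, h2⟩ | h1)
          · exact ⟨h1, Or.inl h2⟩
          · exact ⟨hVsub h1, Or.inr h1⟩
      rw [heq]
      exact ihU.2.union ihV.1

lemma aux_bool_sUnion {F : Set (E → k)} {Ω : Set E} :
    ∀ 𝒮 : Set (Set E), 𝒮.Finite → (∀ C ∈ 𝒮, MemBoolF F Ω C) → MemBoolF F Ω (⋃₀ 𝒮) := by
  intro 𝒮 hfin
  refine Set.Finite.induction_on (motive := fun s _ =>
    (∀ C ∈ s, MemBoolF F Ω C) → MemBoolF F Ω (⋃₀ s)) 𝒮 hfin ?_ ?_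
  · intro _; rw [Set.sUnion_empty]; exact MemBoolF.empty
  · intro A s hni hfin ih h
    rw [Set.sUnion_insert]
    exact (h _ (Set.mem_insert _ _)).union (ih fun C hC => h C (Set.mem_insert_of_mem _ hC))

lemma aux_union_greatest {F : Set (E → k)} {Ω : Set E} (hΩ : IsConvexSet k E Ω)
    (hF : ∀ f ∈ F, IsAffineFunctional k E f) {a : E → k} (ha : IsAffineFunctional k E a)
    {Wp Wm : Set E}
    (hWp : IsGreatest {V : Set E | MemBoolF F Ω V ∧ V ⊆ {x ∈ Ω | 0 < a x}} Wp)
    (hWm : IsGreatest {V : Set E | MemBoolF F Ω V ∧ V ⊆ {x ∈ Ω | a x < 0}} Wm) :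
    IsGreatest {V : Set E | MemBoolF F Ω V ∧
      V ⊆ {x ∈ Ω | 0 < a x} ∪ {x ∈ Ω | a x < 0}} (Wp ∪ Wm) := by
  constructor
  · exact ⟨hWp.1.1.union hWm.1.1, Set.union_subset_union hWp.1.2 hWm.1.2⟩
  · intro V hV
    obtain ⟨𝒮, hfin, hprops, rfl⟩ := (aux_main_dec hΩ hF hV.1).1
    apply Set.sUnion_subset
    intro C hC
    have hCsub : C ⊆ {x ∈ Ω | 0 < a x} ∪ {x ∈ Ω | a x < 0} :=
      (Set.subset_sUnion_of_mem hC).trans hV.2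
    rcases aux_dichotomy ha (hprops C hC).2 hCsub with h | h
    · exact (hWp.2 ⟨(hprops C hC).1, h⟩).trans Set.subset_union_left
    · exact (hWm.2 ⟨(hprops C hC).1, h⟩).trans Set.subset_union_right

lemma aux_split {F : Set (E → k)} {Ω : Set E} (hΩ : IsConvexSet k E Ω)
    (hF : ∀ f ∈ F, IsAffineFunctional k E f) {a : E → k} (ha : IsAffineFunctional k E a)
    {W : Set E}
    (hW : IsGreatest {V : Set E | MemBoolF F Ω V ∧
      V ⊆ {x ∈ Ω | 0 < a x} ∪ {x ∈ Ω | a x < 0}} W) :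
    (∃ Wp : Set E, IsGreatest {V : Set E | MemBoolF F Ω V ∧ V ⊆ {x ∈ Ω | 0 < a x}} Wp) ∧
    (∃ Wm : Set E, IsGreatest {V : Set E | MemBoolF F Ω V ∧ V ⊆ {x ∈ Ω | a x < 0}} Wm) := by
  obtain ⟨𝒮, hfin, hprops, hWeq⟩ := (aux_main_dec hΩ hF hW.1.1).1
  have hdich : ∀ C ∈ 𝒮, C ⊆ {x ∈ Ω | 0 < a x} ∨ C ⊆ {x ∈ Ω | a x < 0} := by
    intro C hC
    have hCsub : C ⊆ {x ∈ Ω | 0 < a x} ∪ {x ∈ Ω | a x < 0} := by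
      refine subset_trans ?_ hW.1.2
      rw [hWeq]
      exact Set.subset_sUnion_of_mem hC
    exact aux_dichotomy ha (hprops C hC).2 hCsub
  constructor
  · refine ⟨⋃₀ {C ∈ 𝒮 | C ⊆ {x ∈ Ω | 0 < a x}}, ⟨?_, ?_⟩, ?_⟩
    · exact aux_bool_sUnion _ (hfin.subset (Set.sep_subset _ _))
        fun C hC => (hprops C hC.1).1
    · exact Set.sUnion_subset fun C hC => hC.2
    · intro V hV x hx
      have hVW : V ⊆ W := hW.2 ⟨hV.1, hV.2.trans Set.subset_union_left⟩
      have hxW := hVW hx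
      rw [hWeq] at hxW
      obtain ⟨C, hC, hxC⟩ := hxW
      rcases hdich C hC with h | h
      · exact ⟨C, ⟨hC, h⟩, hxC⟩
      · exact absurd (hV.2 hx).2 (asymm (h hxC).2)
  · refine ⟨⋃₀ {C ∈ 𝒮 | C ⊆ {x ∈ Ω | a x < 0}}, ⟨?_, ?_⟩, ?_⟩
    · exact aux_bool_sUnion _ (hfin.subset (Set.sep_subset _ _))
        fun C hC => (hprops C hC.1).1
    · exact Set.sUnion_subset fun C hC => hC.2
    · intro V hV x hx
      have hVW : V ⊆ W := hW.2 ⟨hV.1, hV.2.trans Set.subset_union_right⟩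
      have hxW := hVW hx
      rw [hWeq] at hxW
      obtain ⟨C, hC, hxC⟩ := hxW
      rcases hdich C hC with h | h
      · exact absurd (hV.2 hx).2 (asymm (h hxC).2)
      · exact ⟨C, ⟨hC, h⟩, hxC⟩

end Aux


/-- for a convex set `Ω` in a right `k`-vector space `E` and affine
functionals `F ∪ {a}` on `E`, with `A⁺ = {x ∈ Ω : a x > 0}` and `A⁻ = {x ∈ Ω : a x < 0}`:
the greatest member of `Bool(F, Ω)` contained in `A⁺ ∪ A⁻` exists iff the greatest
members of `Bool(F, Ω)` contained in `A⁺` and in `A⁻` both exist, in which case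
`(A⁺ ∪ A⁻)_{Bool(F,Ω)} = (A⁺)_{Bool(F,Ω)} ∪ (A⁻)_{Bool(F,Ω)}`. -/
theorem stmt12 (k : Type*) [DivisionRing k] [LinearOrder k]
    [CovariantClass k k (· + ·) (· < ·)] [PosMulStrictMono k] [MulPosStrictMono k]
    (E : Type*) [AddCommGroup E] [Module kᵐᵒᵖ E]
    (Ω : Set E) (hΩ : IsConvexSet k E Ω)
    (F : Set (E → k)) (hF : ∀ f ∈ F, IsAffineFunctional k E f)
    (a : E → k) (ha : IsAffineFunctional k E a) :
    ((∃ W : Set E,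
        IsGreatest {V : Set E | MemBoolF F Ω V ∧
          V ⊆ {x ∈ Ω | 0 < a x} ∪ {x ∈ Ω | a x < 0}} W) ↔
      ((∃ W : Set E, IsGreatest {V : Set E | MemBoolF F Ω V ∧ V ⊆ {x ∈ Ω | 0 < a x}} W) ∧
       (∃ W : Set E,
          IsGreatest {V : Set E | MemBoolF F Ω V ∧ V ⊆ {x ∈ Ω | a x < 0}} W))) ∧
    (∀ W Wp Wm : Set E,
      IsGreatest {V : Set E | MemBoolF F Ω V ∧
        V ⊆ {x ∈ Ω | 0 < a x} ∪ {x ∈ Ω | a x < 0}} W →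
      IsGreatest {V : Set E | MemBoolF F Ω V ∧ V ⊆ {x ∈ Ω | 0 < a x}} Wp →
      IsGreatest {V : Set E | MemBoolF F Ω V ∧ V ⊆ {x ∈ Ω | a x < 0}} Wm →
      W = Wp ∪ Wm) := by
  constructor
  · constructor
    · rintro ⟨W, hW⟩
      exact aux_split hΩ hF ha hW
    · rintro ⟨⟨Wp, hWp⟩, ⟨Wm, hWm⟩⟩
      exact ⟨Wp ∪ Wm, aux_union_greatest hΩ hF ha hWp hWm⟩
  · intro W Wp Wm hW hWp hWm
    exact hW.unique (aux_union_greatest hΩ hF ha hWp hWm)
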